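/- arXiv:1803.09962 — 4 statements merged into one kernel-verified Lean document; each statement's English description precedes it below -/
import Mathlib

section
/- For the Weierstrass curve y² + 3ν·xy + (ν³−1)·y = x³ over B, the j-invariant satisfies j·(ν³−1)³ = 27ν³(ν³+8)³. -/
open Polynomial

noncomputable section

/-- The Eisenstein integers `ℤ[ω] = ℤ[X]/(X² + X + 1)`. -/
abbrev EisensteinInt : Type := AdjoinRoot (X ^ 2 + X + 1 : ℤ[X])

/-- `A = ℤ[1/3][ω]`. -/
abbrev RingA : Type := Localization.Away (3 : EisensteinInt)

/-- `B = ℤ[1/3][ω, ν, (ν³ - 1)⁻¹]`. -/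
abbrev RingB : Type := Localization.Away ((X : (RingA)[X]) ^ 3 - 1)

/-- The image of ω in B. -/
def ωB : RingB := algebraMap (RingA)[X] RingB
  (C (algebraMap EisensteinInt RingA (AdjoinRoot.root _)))

/-- The image of ν in B. -/
def νB : RingB := algebraMap (RingA)[X] RingB X


/-- The Weierstrass curve `y² + 3ν·xy + (ν³−1)·y = x³` over `B`. -/
def curveC : WeierstrassCurve RingB :=
  { a₁ := 3 * νB, a₂ := 0, a₃ := νB ^ 3 - 1, a₄ := 0, a₆ := 0 }

/-- For the curve `y² + 3ν·xy + (ν³−1)·y = x³` over `B` (which is elliptic),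
the j-invariant satisfies `j·(ν³−1)³ = 27ν³(ν³+8)³`. -/
theorem stmt7 (h : curveC.IsElliptic) :
    curveC.j * (νB ^ 3 - 1) ^ 3 = 27 * νB ^ 3 * (νB ^ 3 + 8) ^ 3 := by
  have h3 : IsUnit (3 : RingB) := by
    have hA : IsUnit (algebraMap EisensteinInt RingA 3) :=
      IsLocalization.Away.algebraMap_isUnit (3 : EisensteinInt)
    have : IsUnit (algebraMap (RingA)[X] RingB (C (algebraMap EisensteinInt RingA 3))) :=
      (hA.map C).map (algebraMap (RingA)[X] RingB)
    simpa only [map_ofNat] using this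
  have h27 : IsUnit (27 : RingB) := by
    have := h3.pow 3
    norm_num at this
    exact this
  have hΔ : curveC.Δ = 27 * (νB ^ 3 - 1) ^ 3 := by
    simp only [WeierstrassCurve.Δ, WeierstrassCurve.b₂, WeierstrassCurve.b₄,
      WeierstrassCurve.b₆, WeierstrassCurve.b₈, curveC]
    ring
  have hc4 : curveC.c₄ = 9 * νB * (νB ^ 3 + 8) := by
    simp only [WeierstrassCurve.c₄, WeierstrassCurve.b₂, WeierstrassCurve.b₄, curveC]
    ring
  have key : curveC.j * curveC.Δ = curveC.c₄ ^ 3 := by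
    rw [WeierstrassCurve.j, mul_assoc, mul_comm (curveC.c₄ ^ 3), ← mul_assoc,
      ← WeierstrassCurve.coe_Δ', Units.inv_mul, one_mul]
  apply h27.mul_left_cancel
  rw [hΔ, hc4] at key
  calc 27 * (curveC.j * (νB ^ 3 - 1) ^ 3) = curveC.j * (27 * (νB ^ 3 - 1) ^ 3) := by ring
    _ = (9 * νB * (νB ^ 3 + 8)) ^ 3 := key
    _ = 27 * (27 * νB ^ 3 * (νB ^ 3 + 8) ^ 3) := by ring
end
end

section
/- The point (0,0) lies on the affine Weierstrass curve y² + 3ν·xy + (ν³−1)·y = x³ over B and is a point of order exactly 3 in the group of points. -/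
open WeierstrassCurve.Affine

/-- Over any field `F` in which `3 ≠ 0`, with `ν ∈ F` such that `ν³ ≠ 1` (e.g. the
fraction field of `B₀ = ℤ[1/3][ν, (ν³−1)⁻¹]` with `ν` transcendental), the point
`(0, 0)` lies on the elliptic curve `y² + 3ν·xy + (ν³−1)·y = x³` and has order
exactly `3` in the group of points. -/
theorem stmt8 (F : Type*) [Field F] (ν : F) (h3 : (3 : F) ≠ 0) (hν : ν ^ 3 ≠ 1)
    (W : WeierstrassCurve.Affine F)
    (hW : W = { a₁ := 3 * ν, a₂ := 0, a₃ := ν ^ 3 - 1, a₄ := 0, a₆ := 0 }) :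
    ∃ h : W.Nonsingular 0 0,
      W.Equation 0 0 ∧ open Classical in addOrderOf (WeierstrassCurve.Affine.Point.some (x := 0) (y := 0) h) = 3 := by
  subst hW
  have ha3 : ν ^ 3 - 1 ≠ 0 := sub_ne_zero.mpr hν
  have h : WeierstrassCurve.Affine.Nonsingular
      { a₁ := 3 * ν, a₂ := 0, a₃ := ν ^ 3 - 1, a₄ := 0, a₆ := 0 } (0 : F) 0 := by
    rw [nonsingular_zero]
    exact ⟨rfl, Or.inl ha3⟩
  refine ⟨h, equation_zero.mpr rfl, ?_⟩
  haveI : Fact (Nat.Prime 3) := ⟨by norm_num⟩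
  let W : WeierstrassCurve.Affine F :=
    { a₁ := 3 * ν, a₂ := 0, a₃ := ν ^ 3 - 1, a₄ := 0, a₆ := 0 }
  have hWdef : W = { a₁ := 3 * ν, a₂ := 0, a₃ := ν ^ 3 - 1, a₄ := 0, a₆ := 0 } := rfl
  have hy : (0 : F) ≠ W.negY 0 0 := by
    simp only [negY, hWdef]
    intro hc
    apply ha3
    linear_combination hc
  classical
  refine addOrderOf_eq_prime ?_ (Point.some_ne_zero (x := 0) (y := 0) h)
  have h2 : Point.some _ _ h + Point.some _ _ h =
      Point.some _ _ (nonsingular_add h h fun hxy => hy hxy.right) := Point.add_self_of_Y_ne hy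
  have hslope : W.slope 0 0 0 0 = 0 := by
    rw [slope_of_Y_ne rfl hy]
    simp [hWdef]
  have hx : W.addX 0 0 (W.slope 0 0 0 0) = 0 := by
    rw [hslope]; simp [WeierstrassCurve.Affine.addX, hWdef]
  have hy2 : W.addY 0 0 0 (W.slope 0 0 0 0) = W.negY 0 0 := by
    rw [hslope]
    simp [WeierstrassCurve.Affine.addY, WeierstrassCurve.Affine.negAddY,
      WeierstrassCurve.Affine.addX, negY, hWdef]
  show (3 : ℕ) • Point.some _ _ h = 0
  rw [succ_nsmul, two_nsmul, h2]
  exact Point.add_of_Y_eq hx hy2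
end

section
/- The point Q = (−(ν−ω²)(ν−ω), (ν−ω²)²(ν−ω)) on the elliptic curve y² + 3ν·xy + (ν³−1)·y = x³ has order exactly 3. -/
open WeierstrassCurve.Affine WeierstrassCurve.Affine.Point

private lemma some_eq_some' {R : Type*} [CommRing R] {W : WeierstrassCurve.Affine R}
    {x₁ y₁ x₂ y₂ : R} (hx : x₁ = x₂) (hy : y₁ = y₂) {h₁ : W.Nonsingular x₁ y₁}
    {h₂ : W.Nonsingular x₂ y₂} :
    WeierstrassCurve.Affine.Point.some _ _ h₁ = WeierstrassCurve.Affine.Point.some _ _ h₂ := by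
  subst hx; subst hy; rfl

open Classical in
/-- Over any field `K` in which `3 ≠ 0`, containing a primitive cube root of unity `ω`
(so `1 + ω + ω² = 0`) and an element `ν` with `ν³ ≠ 1` (e.g. the fraction field of
`B = ℤ[1/3][ω, ν, (ν³−1)⁻¹]/(1+ω+ω²)`), the point
`Q = (−(ν−ω²)(ν−ω), (ν−ω²)²(ν−ω))` on the elliptic curve
`y² + 3ν·xy + (ν³−1)·y = x³` has order exactly `3`. -/
theorem stmt11 (K : Type*) [Field K] (ω ν : K) (h3 : (3 : K) ≠ 0)
    (hω : 1 + ω + ω ^ 2 = 0) (hν : ν ^ 3 ≠ 1)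
    (W : WeierstrassCurve.Affine K)
    (hW : W = { a₁ := 3 * ν, a₂ := 0, a₃ := ν ^ 3 - 1, a₄ := 0, a₆ := 0 }) :
    ∃ h : W.Nonsingular (-((ν - ω ^ 2) * (ν - ω))) ((ν - ω ^ 2) ^ 2 * (ν - ω)),
      addOrderOf (WeierstrassCurve.Affine.Point.some _ _ h) = 3 := by
  subst hW
  set X : K := -((ν - ω ^ 2) * (ν - ω)) with hX
  set Y : K := (ν - ω ^ 2) ^ 2 * (ν - ω) with hY
  set W : WeierstrassCurve.Affine K :=
    { a₁ := 3 * ν, a₂ := 0, a₃ := ν ^ 3 - 1, a₄ := 0, a₆ := 0 } with hWdef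
  have hfac : ν ^ 3 - 1 = (ν - 1) * (ν - ω) * (ν - ω ^ 2) := by
    linear_combination (-1 + ν^2 + ω - ω*ν) * hω
  have hA : ν - ω ≠ 0 := by
    intro h
    exact hν (by linear_combination hfac + (ν - 1) * (ν - ω^2) * h)
  have hB : ν - ω ^ 2 ≠ 0 := by
    intro h
    exact hν (by linear_combination hfac + (ν - 1) * (ν - ω) * h)
  have hwd : ω - ω ^ 2 ≠ 0 := by
    intro h
    apply h3
    have h9 : (ω - ω ^ 2) ^ 2 = -3 := by linear_combination (3 - 3*ω + ω^2) * hω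
    rw [h] at h9
    linear_combination h9
  set D : K := 2 * Y + 3 * ν * X + (ν ^ 3 - 1) with hD
  set N : K := 3 * X ^ 2 - 3 * ν * Y with hN
  have hden : D = (ν - ω ^ 2) * (ν - ω) * (ω - ω ^ 2) := by
    rw [hD, hX, hY]
    linear_combination (-1 + ω + ω^2*ν - ω^3) * hω
  have hdne : D ≠ 0 := by
    rw [hden]; exact mul_ne_zero (mul_ne_zero hB hA) hwd
  have heq : W.Equation X Y := by
    rw [equation_iff]
    show Y ^ 2 + 3 * ν * X * Y + (ν ^ 3 - 1) * Y = X ^ 3 + 0 * X ^ 2 + 0 * X + 0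
    rw [hX, hY]
    linear_combination (-ν^3 + ω*ν^2 + ω*ν^3 + ω^2*ν^2 + ω^2*ν^4 - 2*ω^3*ν - 2*ω^3*ν^2 - 2*ω^3*ν^3 + ω^4*ν + ω^4*ν^2 - 2*ω^4*ν^3 + ω^5 + ω^5*ν + 4*ω^5*ν^2 - ω^6 - 2*ω^6*ν + ω^6*ν^2 - 2*ω^7*ν + ω^8) * hω
  have hns : W.Nonsingular X Y := by
    rw [nonsingular_iff']
    refine ⟨heq, Or.inr ?_⟩
    show 2 * Y + 3 * ν * X + (ν ^ 3 - 1) ≠ 0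
    rw [← hD]; exact hdne
  have hnegY : W.negY X Y = -Y - 3 * ν * X - (ν ^ 3 - 1) := rfl
  have hy : Y ≠ W.negY X Y := by
    intro h
    apply hdne
    rw [hnegY] at h
    rw [hD]
    linear_combination h
  have hL : W.slope X X Y Y = N / D := by
    rw [slope_of_Y_ne rfl hy, hnegY]
    show (3 * X ^ 2 + 2 * 0 * X + 0 - 3 * ν * Y) / (Y - (-Y - 3 * ν * X - (ν ^ 3 - 1))) = N / D
    rw [hN, hD]
    congr 1 <;> ring
  have hLc : N = ((ω ^ 2 - 1) * (ν - ω ^ 2)) * D := by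
    rw [hN, hD, hX, hY]
    linear_combination (-ν + ω*ν - 2*ω*ν^3 + ω^2 + ω^2*ν + 3*ω^2*ν^2 + ω^2*ν^3 - ω^3 - 2*ω^3*ν + 3*ω^3*ν^2 - ω^4 - 5*ω^4*ν - 3*ω^4*ν^2 + 2*ω^5 + ω^5*ν + 2*ω^6 + 2*ω^6*ν - 2*ω^7) * hω
  have hL2 : W.slope X X Y Y = (ω ^ 2 - 1) * (ν - ω ^ 2) := by
    rw [hL, hLc, mul_div_cancel_right₀ _ hdne]
  have key : W.addX X X (W.slope X X Y Y) = X := by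
    have h1 : W.addX X X (W.slope X X Y Y) = ((ω ^ 2 - 1) * (ν - ω ^ 2)) ^ 2
        + 3 * ν * ((ω ^ 2 - 1) * (ν - ω ^ 2)) - 0 - X - X := by
      rw [hL2]; rfl
    rw [h1, hX]
    linear_combination (ν^2 - 3*ω*ν - ω*ν^2 + ω^2*ν + ω^2*ν^2 + 3*ω^3 + 2*ω^3*ν - 2*ω^4 - 2*ω^4*ν - ω^5 + ω^6) * hω
  have key2 : W.negAddY X X Y (W.slope X X Y Y) = Y := by
    rw [WeierstrassCurve.Affine.negAddY, key, sub_self, mul_zero, zero_add]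
  have hadd : Point.some _ _ hns + Point.some _ _ hns = -Point.some _ _ hns := by
    rw [add_self_of_Y_ne' hy]
    exact neg_inj.mpr (some_eq_some' key key2)
  have h3smul : (3 : ℕ) • Point.some _ _ hns = (0 : W.Point) := by
    have h2 : ((3 : ℕ) • Point.some _ _ hns : W.Point)
        = Point.some _ _ hns + Point.some _ _ hns + Point.some _ _ hns := by
      rw [succ_nsmul, two_nsmul]
    rw [h2, hadd, neg_add_cancel]
  haveI : Fact (Nat.Prime 3) := ⟨by norm_num⟩
  exact ⟨hns, addOrderOf_eq_prime h3smul (some_ne_zero hns)⟩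
end

section
/- The map β* determined by β*(ω) = ω and β*(ν) = (ν+2)/(ν−1) defines a ring automorphism of B = Z[1/3][ω, ν, (ν³−1)⁻¹]/(1+ω+ω²). -/
set_option maxHeartbeats 1600000
set_option synthInstance.maxHeartbeats 1000000


open Polynomial

noncomputable section

/-- There is a ring automorphism `β*` of `B = ℤ[1/3][ω, ν, (ν³−1)⁻¹]/(1+ω+ω²)` with
`β*(ω) = ω` and `β*(ν) = (ν+2)/(ν−1)` (note `ν−1` is invertible in `B`, so the latter
condition is expressed as `β*(ν)·(ν−1) = ν+2` together with invertibility of `ν−1`). -/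
theorem stmt12 :
    IsUnit (νB - 1) ∧
    ∃ β : RingB ≃+* RingB, β ωB = ωB ∧ β νB * (νB - 1) = νB + 2 := by
  have h3 : IsUnit (νB ^ 3 - 1) := by
    have h := IsLocalization.Away.algebraMap_isUnit (S := RingB) ((X : (RingA)[X]) ^ 3 - 1)
    have e : (algebraMap (RingA)[X] RingB) ((X : (RingA)[X]) ^ 3 - 1) = νB ^ 3 - 1 :=
      (map_sub (algebraMap (RingA)[X] RingB) _ _).trans
        (by rw [map_pow (algebraMap (RingA)[X] RingB), map_one (algebraMap (RingA)[X] RingB)]; rfl)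
    rwa [e] at h
  have hu : IsUnit (νB - 1) := by
    refine isUnit_of_mul_isUnit_left (y := νB ^ 2 + νB + 1) ?_
    have h : (νB - 1) * (νB ^ 2 + νB + 1) = νB ^ 3 - 1 := by ring
    rwa [h]
  have hq : IsUnit (νB ^ 2 + νB + 1) := by
    refine isUnit_of_mul_isUnit_right (x := νB - 1) ?_
    have h : (νB - 1) * (νB ^ 2 + νB + 1) = νB ^ 3 - 1 := by ring
    rwa [h]
  obtain ⟨w, hw⟩ := id hu
  have hww : (νB - 1) * ↑w⁻¹ = 1 := by rw [← hw]; exact w.mul_inv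
  have h3u : IsUnit (3 : RingB) := by
    have hA : IsUnit (3 : RingA) := by
      have h := IsLocalization.Away.algebraMap_isUnit (S := RingA) (3 : EisensteinInt)
      rw [map_ofNat] at h
      exact h
    have h2 := hA.map ((algebraMap (RingA)[X] RingB).comp C)
    rwa [map_ofNat] at h2
  set t : RingB := (νB + 2) * ↑w⁻¹ with ht
  set f : RingA →+* RingB := (algebraMap (RingA)[X] RingB).comp C with hf
  set φ : (RingA)[X] →+* RingB := eval₂RingHom f t with hφ
  have hφC : ∀ a : RingA, φ (C a) = algebraMap (RingA)[X] RingB (C a) := fun a => by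
    simp [hφ, hf]
  have hφX : φ X = t := eval₂_X _ _
  have hφunit : IsUnit (φ ((X : (RingA)[X]) ^ 3 - 1)) := by
    have hval : φ ((X : (RingA)[X]) ^ 3 - 1) = t ^ 3 - 1 := by
      exact (map_sub φ _ _).trans (by rw [map_pow φ, map_one φ, hφX])
    have hkey : t ^ 3 - 1 = 9 * (νB ^ 2 + νB + 1) * (↑w⁻¹ : RingB) ^ 3 := by
      rw [ht]
      linear_combination (((νB - 1) * (↑w⁻¹ : RingB)) ^ 2 + (νB - 1) * ↑w⁻¹ + 1) * hww
    rw [hval, hkey]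
    have h9 : IsUnit (9 : RingB) := by
      rw [show (9 : RingB) = 3 * 3 by norm_num]
      exact h3u.mul h3u
    exact (h9.mul hq).mul ((w⁻¹).isUnit.pow 3)
  let β0 : RingB →+* RingB :=
    IsLocalization.Away.lift ((X : (RingA)[X]) ^ 3 - 1) hφunit
  have hβ0 : ∀ p : (RingA)[X], β0 (algebraMap (RingA)[X] RingB p) = φ p := fun p =>
    IsLocalization.Away.lift_eq _ hφunit p
  have hβν : β0 νB = t := by rw [νB, hβ0, hφX]
  have hβω : β0 ωB = ωB := by rw [ωB, hβ0]; exact hφC _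
  have ht1 : t - 1 = 3 * (↑w⁻¹ : RingB) := by rw [ht]; linear_combination hww
  have hmain : β0 νB * (νB - 1) = νB + 2 := by
    rw [hβν, ht]; linear_combination (νB + 2) * hww
  -- involution
  have hs : (t - 1) * β0 ↑w⁻¹ = 1 := by
    have h1 : β0 ↑w = t - 1 := by rw [hw, map_sub, map_one, hβν]
    rw [← h1, ← map_mul, w.mul_inv, map_one]
  have ht3 : t + 2 = νB * (t - 1) := by
    rw [ht]; linear_combination (-(νB + 2)) * hww
  have hββν : β0 t = νB := by
    have h1 : β0 t = (t + 2) * β0 ↑w⁻¹ := by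
      rw [ht, map_mul, map_add, hβν, map_ofNat]
    rw [h1, ht3, mul_assoc, hs, mul_one]
  have hcomp : β0.comp β0 = RingHom.id RingB := by
    apply IsLocalization.ringHom_ext (Submonoid.powers ((X : (RingA)[X]) ^ 3 - 1))
    refine Polynomial.ringHom_ext (fun a => ?_) ?_
    · simp only [RingHom.comp_apply, RingHom.id_apply]
      rw [hβ0, hφC, hβ0, hφC]
    · simp only [RingHom.comp_apply, RingHom.id_apply]
      rw [show (algebraMap (RingA)[X] RingB) X = νB from rfl, hβν, hββν]
  refine ⟨hu, RingEquiv.ofRingHom β0 β0 hcomp hcomp, ?_, ?_⟩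
  · exact hβω
  · rw [show (RingEquiv.ofRingHom β0 β0 hcomp hcomp) νB = β0 νB from rfl]
    exact hmain
end
end
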